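/- Let 0 < s < ℓ, L = 2^ℓ, and x₀, x₁ ∈ [0, L). Write x_b = u_b·2^s + v_b with v_b ∈ [0, 2^s). Let x = (x₀ + x₁) mod L. Then the truncate-and-reduce value TR(x, s) := ⌊x / 2^s⌋ (an element of [0, 2^{ℓ-s})) satisfies TR(x, s) = (u₀ + u₁ + wrap(v₀, v₁, 2^s)) mod 2^{ℓ-s}. -/

import Mathlib

def wrap (a b M : ℕ) : ℕ := if M ≤ a + b then 1 else 0

theorem stmt3 (ℓ s : ℕ) (hs : 0 < s) (hsl : s < ℓ)
    (x₀ x₁ u₀ u₁ v₀ v₁ x : ℕ)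
    (hx₀ : x₀ < 2 ^ ℓ) (hx₁ : x₁ < 2 ^ ℓ)
    (hd₀ : x₀ = u₀ * 2 ^ s + v₀) (hd₁ : x₁ = u₁ * 2 ^ s + v₁)
    (hv₀ : v₀ < 2 ^ s) (hv₁ : v₁ < 2 ^ s)
    (hx : x = (x₀ + x₁) % 2 ^ ℓ) :
    x / 2 ^ s = (u₀ + u₁ + wrap v₀ v₁ (2 ^ s)) % 2 ^ (ℓ - s) := by
  set k := 2 ^ s with hk
  set m := 2 ^ (ℓ - s) with hm
  have hk0 : 0 < k := Nat.pow_pos (by norm_num)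
  have hm0 : 0 < m := Nat.pow_pos (by norm_num)
  have hLk : 2 ^ ℓ = m * k := by
    rw [hm, hk, ← pow_add]
    congr 1
    omega
  set w := wrap v₀ v₁ k with hw
  have hwr : w * k ≤ v₀ + v₁ ∧ v₀ + v₁ - w * k < k := by
    rw [hw]; unfold wrap
    split <;> omega
  set r := v₀ + v₁ - w * k with hr
  set a := u₀ + u₁ + w with ha
  have hwk : w * k + r = v₀ + v₁ := by omega
  have hsum : x₀ + x₁ = a * k + r := by
    rw [hd₀, hd₁, ha]
    have : (u₀ + u₁ + w) * k = u₀ * k + u₁ * k + w * k := by ring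
    omega
  have hxval : x = (a % m) * k + r := by
    rw [hx, hsum, hLk]
    have : a * k + r = (m * k) * (a / m) + ((a % m) * k + r) := by
      conv_lhs => rw [← Nat.div_add_mod a m]
      ring
    rw [this, Nat.mul_add_mod]
    apply Nat.mod_eq_of_lt
    have h1 : a % m < m := Nat.mod_lt _ hm0
    have h2 : (a % m + 1) * k ≤ m * k := Nat.mul_le_mul_right k (by omega)
    have h3 : (a % m + 1) * k = a % m * k + k := by ring
    linarith [hwr.2]
  rw [hxval, add_comm, Nat.add_mul_div_right _ _ hk0, Nat.div_eq_of_lt hwr.2]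
  omega
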